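/- As z → 0 from the left the following asymptotics hold, with C₀ = 1/√2: a(z) + C₀ (−z)^{−1/2} = O((−z)^{1/2}), b(z) − C₀ (−z)^{−1/2} + 1 = O((−z)^{1/2}), and c(z) + C₀ (−z)^{−1/2} − 1 = O((−z)^{1/2}) (big-O taken along the filter of left neighborhoods of 0). -/

import Mathlib

open MeasureTheory Real Filter Topology Asymptotics

/-- `a(z) = (1/2π)∫_{−π}^{π} dq/(z − 1 + cos q)`. -/
noncomputable def aF (z : ℝ) : ℝ :=
  (2 * Real.pi)⁻¹ * ∫ q in (-Real.pi)..Real.pi, (z - 1 + Real.cos q)⁻¹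

/-- `b(z) = −(1/2π)∫_{−π}^{π} cos q dq/(z − 1 + cos q)`. -/
noncomputable def bF (z : ℝ) : ℝ :=
  -((2 * Real.pi)⁻¹ * ∫ q in (-Real.pi)..Real.pi, Real.cos q / (z - 1 + Real.cos q))

/-- `c(z) = (1/2π)∫_{−π}^{π} cos² q dq/(z − 1 + cos q)`. -/
noncomputable def cF (z : ℝ) : ℝ :=
  (2 * Real.pi)⁻¹ * ∫ q in (-Real.pi)..Real.pi, (Real.cos q) ^ 2 / (z - 1 + Real.cos q)

/-- The Fredholm determinant `Δ(μ,λ;z) = (1 − μ a(z))(1 − λ c(z)) − μλ b(z)²`. -/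
noncomputable def Δdet (μ lam z : ℝ) : ℝ :=
  (1 - μ * aF z) * (1 - lam * cF z) - μ * lam * (bF z) ^ 2

/-- The Poisson-kernel integral: for `|s| < 1`,
`∫_{-π}^{π} dq/(1 + s² + 2 s cos q) = 2π/(1 - s²)`. -/
lemma poisson_integral (s : ℝ) (hs : |s| < 1) :
    ∫ q in (-Real.pi)..Real.pi, (1 + s^2 + 2*s*Real.cos q)⁻¹ = 2*Real.pi/(1-s^2) := by
  have hs2 : s^2 < 1 := by nlinarith [sq_abs s, abs_nonneg s]
  have hbound : ∀ q : ℝ, -|s| ≤ s * Real.cos q ∧ s * Real.cos q ≤ |s| := by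
    intro q
    have h1 : |s * Real.cos q| ≤ |s| := by
      rw [abs_mul]
      exact mul_le_of_le_one_right (abs_nonneg s) (Real.abs_cos_le_one q)
    exact abs_le.mp h1
  have hden : ∀ q : ℝ, 0 < 1 + s^2 + 2*s*Real.cos q := by
    intro q
    have h2 := (hbound q).1
    nlinarith [sq_abs s, sq_nonneg (1 - |s|)]
  have hden2 : ∀ q : ℝ, 0 < 1 + s * Real.cos q := by
    intro q
    have h2 := (hbound q).1
    nlinarith [abs_nonneg s]
  set F : ℝ → ℝ := fun q => (1-s^2)⁻¹ * (q - 2 * Real.arctan (s * Real.sin q / (1 + s * Real.cos q))) with hF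
  have hderiv : ∀ q ∈ Set.uIcc (-Real.pi) Real.pi,
      HasDerivAt F ((1 + s^2 + 2*s*Real.cos q)⁻¹) q := by
    intro q _
    have hne : (1 + s*Real.cos q) ≠ 0 := (hden2 q).ne'
    have hDne : (1 + s^2 + 2*s*Real.cos q) ≠ 0 := (hden q).ne'
    have hsc := Real.sin_sq_add_cos_sq q
    have h1 : HasDerivAt (fun q => s * Real.sin q) (s * Real.cos q) q :=
      (Real.hasDerivAt_sin q).const_mul s
    have h2 : HasDerivAt (fun q => 1 + s * Real.cos q) (s * -Real.sin q) q :=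
      ((Real.hasDerivAt_cos q).const_mul s).const_add 1
    have h3 := h1.div h2 hne
    have h4 := (Real.hasDerivAt_arctan (s * Real.sin q / (1 + s * Real.cos q))).comp q h3
    have h5 := ((hasDerivAt_id q).sub (h4.const_mul 2)).const_mul (1-s^2)⁻¹
    refine h5.congr_deriv ?_
    have hkey : 1 + (s * Real.sin q / (1 + s * Real.cos q)) ^ 2
        = (1 + s^2 + 2*s*Real.cos q) / (1 + s * Real.cos q)^2 := by
      field_simp
      linear_combination s^2 * hsc
    have hnum : s * Real.cos q * (1 + s * Real.cos q) - s * Real.sin q * (s * -Real.sin q)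
        = s * (s + Real.cos q) := by linear_combination s^2 * hsc
    rw [hkey, hnum]
    have h1s : (1 : ℝ) - s^2 ≠ 0 := by nlinarith
    field_simp
    have hDne' : 1 + s ^ 2 + s * 2 * Real.cos q ≠ 0 := by rw [mul_comm s 2]; exact hDne
    field_simp
    ring
  have hint : IntervalIntegrable (fun q => (1 + s^2 + 2*s*Real.cos q)⁻¹) volume (-Real.pi) Real.pi := by
    apply Continuous.intervalIntegrable
    exact (continuous_const.add ((continuous_const.mul Real.continuous_cos))).inv₀ (fun q => (hden q).ne')
  rw [intervalIntegral.integral_eq_sub_of_hasDerivAt hderiv hint]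
  simp [hF, Real.sin_pi, Real.sin_neg, Real.arctan_zero]
  ring

/-- For `z < 0`, `∫_{-π}^{π} dq/(z - 1 + cos q) = -2π/√(z² - 2z)`. -/
lemma inv_integral (z : ℝ) (hz : z < 0) :
    ∫ q in (-Real.pi)..Real.pi, (z - 1 + Real.cos q)⁻¹
      = -(2*Real.pi) / Real.sqrt (z^2 - 2*z) := by
  have hpos : (0:ℝ) < z^2 - 2*z := by nlinarith
  set d : ℝ := Real.sqrt (z^2 - 2*z) with hd
  have hd2 : d^2 = z^2 - 2*z := Real.sq_sqrt hpos.le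
  have hd0 : 0 < d := Real.sqrt_pos.mpr hpos
  set s : ℝ := z - 1 + d with hsdef
  have hzd : -z < d := by
    by_contra h
    push_neg at h
    nlinarith
  have hs1 : -1 < s := by simp only [hsdef]; linarith
  have hs0 : s < 0 := by
    have : d < 1 - z := by
      by_contra h
      push_neg at h
      nlinarith
    simp only [hsdef]; linarith
  have hsabs : |s| < 1 := abs_lt.mpr ⟨hs1, by linarith⟩
  have hseq : s^2 = 2*(z-1)*s - 1 := by
    simp only [hsdef]; linear_combination hd2
  have hsne : s ≠ 0 := hs0.ne
  have key : ∀ q : ℝ, (z - 1 + Real.cos q)⁻¹ = 2*s*(1 + s^2 + 2*s*Real.cos q)⁻¹ := by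
    intro q
    have h1 : 1 + s^2 + 2*s*Real.cos q = 2*s*(z - 1 + Real.cos q) := by
      linear_combination hseq
    rw [h1, mul_inv, ← mul_assoc, mul_inv_cancel₀ (by positivity : (2:ℝ)*s ≠ 0 )]
    · ring
  calc ∫ q in (-Real.pi)..Real.pi, (z - 1 + Real.cos q)⁻¹
      = ∫ q in (-Real.pi)..Real.pi, 2*s*(1 + s^2 + 2*s*Real.cos q)⁻¹ := by
        apply intervalIntegral.integral_congr
        intro q _; exact key q
    _ = 2*s*(2*Real.pi/(1-s^2)) := by
        rw [intervalIntegral.integral_const_mul, poisson_integral s hsabs]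
    _ = -(2*Real.pi) / d := by
        have h2 : 1 - s^2 = -(2*d*s) := by
          simp only [hsdef]; linear_combination hd2
        rw [h2]
        field_simp

lemma denom_neg (z : ℝ) (hz : z < 0) (q : ℝ) : z - 1 + Real.cos q < 0 := by
  nlinarith [Real.cos_le_one q]

lemma cont_inv (z : ℝ) (hz : z < 0) : Continuous fun q => (z - 1 + Real.cos q)⁻¹ := by
  exact ((continuous_const.add Real.continuous_cos)).inv₀ fun q => (denom_neg z hz q).ne

/-- Closed form for `a`: for `z < 0`, `a(z) = -1/√(z² - 2z)`. -/
lemma aF_eq (z : ℝ) (hz : z < 0) : aF z = -(Real.sqrt (z^2 - 2*z))⁻¹ := by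
  have hpi := Real.pi_ne_zero
  rw [aF, inv_integral z hz]
  field_simp

/-- Closed form for `b`: for `z < 0`, `b(z) = -1 + (1-z)/√(z² - 2z)`. -/
lemma bF_eq (z : ℝ) (hz : z < 0) : bF z = -1 + (1 - z) / Real.sqrt (z^2 - 2*z) := by
  have hpi := Real.pi_pos
  have hcongr : ∀ q ∈ Set.uIcc (-Real.pi) Real.pi, Real.cos q / (z - 1 + Real.cos q)
      = 1 - (z-1) * (z - 1 + Real.cos q)⁻¹ := by
    intro q _
    have h := (denom_neg z hz q).ne
    field_simp
    ring
  rw [bF, intervalIntegral.integral_congr hcongr, intervalIntegral.integral_sub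
    intervalIntegrable_const (show IntervalIntegrable (fun q => _ * (z - 1 + Real.cos q)⁻¹) volume _ _ from (continuous_const.mul (cont_inv z hz)).intervalIntegrable _ _),
    intervalIntegral.integral_const, intervalIntegral.integral_const_mul, inv_integral z hz]
  have hd0 : 0 < Real.sqrt (z^2 - 2*z) := Real.sqrt_pos.mpr (by nlinarith)
  field_simp
  ring

/-- Closed form for `c`: for `z < 0`, `c(z) = (1-z) - (z-1)²/√(z² - 2z)`. -/
lemma cF_eq (z : ℝ) (hz : z < 0) : cF z = (1 - z) - (z-1)^2 / Real.sqrt (z^2 - 2*z) := by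
  have hpi := Real.pi_pos
  have hcongr : ∀ q ∈ Set.uIcc (-Real.pi) Real.pi, (Real.cos q)^2 / (z - 1 + Real.cos q)
      = (Real.cos q - (z-1)) + (z-1)^2 * (z - 1 + Real.cos q)⁻¹ := by
    intro q _
    have h := (denom_neg z hz q).ne
    field_simp
    ring
  rw [cF, intervalIntegral.integral_congr hcongr, intervalIntegral.integral_add
    (show IntervalIntegrable (fun q => Real.cos q - _) volume _ _ from (Real.continuous_cos.sub continuous_const).intervalIntegrable _ _)
    (show IntervalIntegrable (fun q => _ * (z - 1 + Real.cos q)⁻¹) volume _ _ from (continuous_const.mul (cont_inv z hz)).intervalIntegrable _ _),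
    intervalIntegral.integral_sub (Real.continuous_cos.intervalIntegrable _ _)
    intervalIntegrable_const,
    integral_cos, intervalIntegral.integral_const,
    intervalIntegral.integral_const_mul, inv_integral z hz]
  have hd0 : 0 < Real.sqrt (z^2 - 2*z) := Real.sqrt_pos.mpr (by nlinarith)
  simp [Real.sin_pi, Real.sin_neg]
  field_simp
  ring

lemma algA (u v w : ℝ) (hu0 : u ≠ 0) (hv0 : v ≠ 0) (hw0 : w ≠ 0) (hvw : v + w ≠ 0)
    (hvu : v^2 = 2 + u^2) (hw2 : w^2 = 2) :
    -(u*v)⁻¹ + w⁻¹ * u⁻¹ = u / (w*v*(v+w)) := by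
  field_simp
  ring_nf
  linear_combination hvu - hw2

lemma algB (u v w : ℝ) (hu0 : u ≠ 0) (hv0 : v ≠ 0) (hw0 : w ≠ 0) (hvw : v + w ≠ 0)
    (hvu : v^2 = 2 + u^2) (hw2 : w^2 = 2) :
    (-1 + (1+u^2) / (u*v)) - w⁻¹ * u⁻¹ + 1 = u*(w*v+1)/(v*w*(v+w)) := by
  field_simp
  ring_nf
  linear_combination -hvu + (1+u^2) * hw2

lemma algC (u v w : ℝ) (hu0 : u ≠ 0) (hv0 : v ≠ 0) (hw0 : w ≠ 0) (hvw : v + w ≠ 0)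
    (hvu : v^2 = 2 + u^2) (hw2 : w^2 = 2) :
    ((1+u^2) - (1+u^2)^2 / (u*v)) + w⁻¹ * u⁻¹ - 1
      = u^2 + u*(1 - w*(v+w)*(2+u^2))/(v*w*(v+w)) := by
  field_simp
  ring_nf
  linear_combination hvu - hw2

set_option maxHeartbeats 2000000 in
/-- As `z → 0⁻`, with `C₀ = 1/√2`:
`a(z) + C₀ (−z)^{−1/2} = O((−z)^{1/2})`,
`b(z) − C₀ (−z)^{−1/2} + 1 = O((−z)^{1/2})`, and
`c(z) + C₀ (−z)^{−1/2} − 1 = O((−z)^{1/2})`. -/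
theorem abc_asymptotics_left_of_zero :
    (fun z : ℝ => aF z + (Real.sqrt 2)⁻¹ * (-z) ^ (-(1/2) : ℝ))
      =O[𝓝[<] (0:ℝ)] (fun z : ℝ => (-z) ^ ((1/2) : ℝ)) ∧
    (fun z : ℝ => bF z - (Real.sqrt 2)⁻¹ * (-z) ^ (-(1/2) : ℝ) + 1)
      =O[𝓝[<] (0:ℝ)] (fun z : ℝ => (-z) ^ ((1/2) : ℝ)) ∧
    (fun z : ℝ => cF z + (Real.sqrt 2)⁻¹ * (-z) ^ (-(1/2) : ℝ) - 1)
      =O[𝓝[<] (0:ℝ)] (fun z : ℝ => (-z) ^ ((1/2) : ℝ)) := by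
  have hmem : Set.Ioo (-1 : ℝ) 0 ∈ 𝓝[<] (0:ℝ) := Ioo_mem_nhdsLT (by norm_num)
  refine ⟨isBigO_iff.mpr ⟨1, ?_⟩, isBigO_iff.mpr ⟨1, ?_⟩, isBigO_iff.mpr ⟨3, ?_⟩⟩
  · -- a
    filter_upwards [hmem] with z hz
    obtain ⟨hz1, hz0⟩ := hz
    set u : ℝ := Real.sqrt (-z) with hu
    set v : ℝ := Real.sqrt (2 - z) with hv
    set w : ℝ := Real.sqrt 2 with hw
    have hu2 : u^2 = -z := Real.sq_sqrt (by linarith)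
    have hv2 : v^2 = 2 - z := Real.sq_sqrt (by linarith)
    have hw2 : w^2 = 2 := Real.sq_sqrt (by norm_num)
    have hu0 : 0 < u := Real.sqrt_pos.mpr (by linarith)
    have hw0 : 0 ≤ w := Real.sqrt_nonneg _
    have hw1 : 1 ≤ w := by nlinarith
    have hwv : w ≤ v := Real.sqrt_le_sqrt (by linarith)
    have hv0 : 0 < v := lt_of_lt_of_le (lt_of_lt_of_le one_pos hw1) hwv
    have hvu : v^2 = 2 + u^2 := by rw [hv2]; linarith
    have hd : Real.sqrt (z^2 - 2*z) = u * v := by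
      rw [show z^2 - 2*z = (-z)*(2-z) by ring, Real.sqrt_mul (by linarith : (0:ℝ) ≤ -z)]
    have hpow : (-z) ^ ((1/2) : ℝ) = u := (Real.sqrt_eq_rpow (-z)).symm
    have hpown : (-z) ^ (-(1/2) : ℝ) = u⁻¹ := by
      rw [Real.rpow_neg (by linarith : (0:ℝ) ≤ -z), hpow]
    have hD0 : 0 < w*v*(v+w) := by nlinarith
    have hA : aF z + w⁻¹ * u⁻¹ = u / (w*v*(v+w)) := by
      rw [aF_eq z hz0, hd]
      exact algA u v w hu0.ne' hv0.ne' (by linarith) (by nlinarith) hvu hw2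
    rw [Real.norm_eq_abs, Real.norm_eq_abs, hpow, hpown, abs_of_nonneg hu0.le, hA,
      one_mul, abs_of_nonneg (div_nonneg hu0.le hD0.le), div_le_iff₀ hD0]
    nlinarith [mul_le_mul_of_nonneg_left (show (1:ℝ) ≤ w*v*(v+w) by nlinarith) hu0.le]
  · -- b
    filter_upwards [hmem] with z hz
    obtain ⟨hz1, hz0⟩ := hz
    set u : ℝ := Real.sqrt (-z) with hu
    set v : ℝ := Real.sqrt (2 - z) with hv
    set w : ℝ := Real.sqrt 2 with hw
    have hu2 : u^2 = -z := Real.sq_sqrt (by linarith)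
    have hv2 : v^2 = 2 - z := Real.sq_sqrt (by linarith)
    have hw2 : w^2 = 2 := Real.sq_sqrt (by norm_num)
    have hu0 : 0 < u := Real.sqrt_pos.mpr (by linarith)
    have hw0 : 0 ≤ w := Real.sqrt_nonneg _
    have hw1 : 1 ≤ w := by nlinarith
    have hwv : w ≤ v := Real.sqrt_le_sqrt (by linarith)
    have hv0 : 0 < v := lt_of_lt_of_le (lt_of_lt_of_le one_pos hw1) hwv
    have hvu : v^2 = 2 + u^2 := by rw [hv2]; linarith
    have hd : Real.sqrt (z^2 - 2*z) = u * v := by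
      rw [show z^2 - 2*z = (-z)*(2-z) by ring, Real.sqrt_mul (by linarith : (0:ℝ) ≤ -z)]
    have hpow : (-z) ^ ((1/2) : ℝ) = u := (Real.sqrt_eq_rpow (-z)).symm
    have hpown : (-z) ^ (-(1/2) : ℝ) = u⁻¹ := by
      rw [Real.rpow_neg (by linarith : (0:ℝ) ≤ -z), hpow]
    have hD0 : 0 < v*w*(v+w) := by nlinarith
    have hB : bF z - w⁻¹ * u⁻¹ + 1 = u*(w*v+1)/(v*w*(v+w)) := by
      rw [bF_eq z hz0, hd, show (1:ℝ) - z = 1 + u^2 by linarith]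
      exact algB u v w hu0.ne' hv0.ne' (by linarith) (by nlinarith) hvu hw2
    have hnum0 : 0 ≤ u*(w*v+1) := by nlinarith
    have hv1 : 1 ≤ v := le_trans hw1 hwv
    have h1 : (1:ℝ) ≤ v*w := by nlinarith
    have hkey : w*v+1 ≤ v*w*(v+w) := by nlinarith
    have hfin : u*(w*v+1) ≤ u*(v*w*(v+w)) := mul_le_mul_of_nonneg_left hkey hu0.le
    rw [Real.norm_eq_abs, Real.norm_eq_abs, hpow, hpown, abs_of_nonneg hu0.le, hB,
      one_mul, abs_of_nonneg (div_nonneg hnum0 hD0.le), div_le_iff₀ hD0]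
    linarith
  · -- c
    filter_upwards [hmem] with z hz
    obtain ⟨hz1, hz0⟩ := hz
    set u : ℝ := Real.sqrt (-z) with hu
    set v : ℝ := Real.sqrt (2 - z) with hv
    set w : ℝ := Real.sqrt 2 with hw
    have hu2 : u^2 = -z := Real.sq_sqrt (by linarith)
    have hv2 : v^2 = 2 - z := Real.sq_sqrt (by linarith)
    have hw2 : w^2 = 2 := Real.sq_sqrt (by norm_num)
    have hu0 : 0 < u := Real.sqrt_pos.mpr (by linarith)
    have hu1 : u < 1 := by nlinarith
    have hw0 : 0 ≤ w := Real.sqrt_nonneg _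
    have hw1 : 1 ≤ w := by nlinarith
    have hwv : w ≤ v := Real.sqrt_le_sqrt (by linarith)
    have hv0 : 0 < v := lt_of_lt_of_le (lt_of_lt_of_le one_pos hw1) hwv
    have hv3 : v ≤ 2 := by nlinarith
    have hvu : v^2 = 2 + u^2 := by rw [hv2]; linarith
    have hd : Real.sqrt (z^2 - 2*z) = u * v := by
      rw [show z^2 - 2*z = (-z)*(2-z) by ring, Real.sqrt_mul (by linarith : (0:ℝ) ≤ -z)]
    have hpow : (-z) ^ ((1/2) : ℝ) = u := (Real.sqrt_eq_rpow (-z)).symm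
    have hpown : (-z) ^ (-(1/2) : ℝ) = u⁻¹ := by
      rw [Real.rpow_neg (by linarith : (0:ℝ) ≤ -z), hpow]
    have hD0 : 0 < v*w*(v+w) := by nlinarith
    have hC : cF z + w⁻¹ * u⁻¹ - 1
        = u^2 + u*(1 - w*(v+w)*(2+u^2))/(v*w*(v+w)) := by
      rw [cF_eq z hz0, hd, show (1:ℝ) - z = 1 + u^2 by linarith,
        show (z-1)^2 = (1+u^2)^2 by linear_combination (z - 2 - u^2) * hu2]
      exact algC u v w hu0.ne' hv0.ne' (by linarith) (by nlinarith) hvu hw2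
    rw [Real.norm_eq_abs, Real.norm_eq_abs, hpow, hpown, abs_of_nonneg hu0.le, hC]
    set T : ℝ := (1 - w*(v+w)*(2+u^2))/(v*w*(v+w)) with hT
    have hmulT : u*(1 - w*(v+w)*(2+u^2))/(v*w*(v+w)) = u * T := by rw [hT]; ring
    have hTle : T ≤ 0 := div_nonpos_iff.mpr (Or.inr ⟨by nlinarith, hD0.le⟩)
    have hTge : -3 ≤ T := by
      rw [hT, le_div_iff₀ hD0]
      nlinarith [mul_le_mul_of_nonneg_left hv3 (mul_nonneg hw0 (by linarith : (0:ℝ) ≤ v+w))]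
    rw [hmulT, abs_le]
    constructor
    · nlinarith [mul_le_mul_of_nonneg_left hTge hu0.le]
    · nlinarith [mul_nonpos_of_nonneg_of_nonpos hu0.le hTle]
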